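/- Define T_n for n ≥ 1 by T_1 = 1 and T_n = Σ_{k=1}^{n-1} C(2n-2, 2k) T_k T_{n-k} for n ≥ 2. Then T_n = (2n-2)!/2^{n-1} · c_{n-1}, where c_0 = 1 and c_k = Σ_{m=0}^{k-1} c_m c_{k-1-m}/((m+1)(2m+1)) for k > 0. -/

import Mathlib

/-- With `T₁ = 1` and `Tₙ = ∑_{k=1}^{n-1} C(2n-2, 2k) T_k T_{n-k}` for `n ≥ 2`,
one has `Tₙ = (2n-2)!/2^{n-1} · c_{n-1}`, where `c₀ = 1` and
`c_k = ∑_{m=0}^{k-1} c_m c_{k-1-m} / ((m+1)(2m+1))` are the Taylor coefficients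
of the inverse error function. -/
theorem ordered_bilabelled_count_inverse_erf
    (T c : ℕ → ℝ)
    (hT1 : T 1 = 1)
    (hT : ∀ n, 2 ≤ n →
      T n = ∑ k ∈ Finset.Ico 1 n, (Nat.choose (2 * n - 2) (2 * k) : ℝ) * T k * T (n - k))
    (hc0 : c 0 = 1)
    (hc : ∀ k, 1 ≤ k →
      c k = ∑ m ∈ Finset.range k, c m * c (k - 1 - m) / (((m : ℝ) + 1) * (2 * (m : ℝ) + 1))) :
    ∀ n, 1 ≤ n →
      T n = (Nat.factorial (2 * n - 2) : ℝ) / 2 ^ (n - 1) * c (n - 1) := by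
  intro n
  induction n using Nat.strong_induction_on with
  | _ n IH =>
  intro hn
  rcases eq_or_lt_of_le hn with h1 | h2
  · subst h1
    norm_num [hT1, hc0]
  · obtain ⟨m, rfl⟩ : ∃ m, n = m + 2 := ⟨n - 2, by omega⟩
    rw [hT _ (by omega)]
    have e1 : 2 * (m + 2) - 2 = 2 * m + 2 := by omega
    have e2 : m + 2 - 1 = m + 1 := by omega
    rw [e1, e2, hc (m + 1) (by omega)]
    simp only [Nat.add_sub_cancel]
    rw [Finset.sum_Ico_eq_sum_range, Finset.mul_sum]
    have e2' : m + 2 - 1 = m + 1 := by omega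
    rw [e2']
    apply Finset.sum_congr rfl
    intro j hj
    have hjm : j ≤ m := by
      have := Finset.mem_range.mp hj; omega
    rw [IH (1 + j) (by omega) (by omega), IH (m + 2 - (1 + j)) (by omega) (by omega)]
    have e3 : 2 * (1 + j) - 2 = 2 * j := by omega
    have e4 : 1 + j - 1 = j := by omega
    have e6 : 2 * (m + 2 - (1 + j)) - 2 = 2 * (m - j) := by omega
    have e7 : m + 2 - (1 + j) - 1 = m - j := by omega
    rw [e3, e4, e6, e7]
    have hbinN := Nat.choose_mul_factorial_mul_factorial
      (show 2 * (1 + j) ≤ 2 * m + 2 by omega)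
    have e8 : 2 * m + 2 - 2 * (1 + j) = 2 * (m - j) := by omega
    rw [e8] at hbinN
    have e9 : (2 * (1 + j)).factorial
        = (2 * j + 2) * ((2 * j + 1) * (2 * j).factorial) := by
      have : 2 * (1 + j) = (2 * j + 1) + 1 := by omega
      rw [this, Nat.factorial_succ, Nat.factorial_succ]
    rw [e9] at hbinN
    have hbin : ((2 * m + 2).choose (2 * (1 + j)) : ℝ)
        * ((2 * j + 2) * ((2 * j + 1) * ((2 * j).factorial : ℝ)))
        * ((2 * (m - j)).factorial : ℝ) = ((2 * m + 2).factorial : ℝ) := by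
      exact_mod_cast congrArg (Nat.cast : ℕ → ℝ) hbinN
    have hA : (0 : ℝ) < ((2 * j).factorial : ℝ) := by
      exact_mod_cast (2 * j).factorial_pos
    have hB : (0 : ℝ) < ((2 * (m - j)).factorial : ℝ) := by
      exact_mod_cast (2 * (m - j)).factorial_pos
    have hp : (2 : ℝ) ^ j * 2 ^ (m - j) = 2 ^ m := by
      rw [← pow_add]; congr 1; omega
    have hp1 : (2 : ℝ) ^ (m + 1) = 2 * (2 ^ j * 2 ^ (m - j)) := by
      rw [hp, pow_succ]; ring
    rw [hp1]
    field_simp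
    linear_combination (c j * c (m - j)) * hbin
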